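/- arXiv:1610.05722 — 2 statements merged into one kernel-verified Lean document; each statement's English description precedes it below -/
import Mathlib

section
/- For every integer m ≥ 0, the Hermite-type polynomial h_m(ξ) = Σ_{i=0}^{⌊m/2⌋} (m!/(i!(m-2i)!)) (-1)^i ξ^{m-2i} satisfies the orthogonality relation ∫_ℝ h_m(ξ) h_n(ξ) ρ(ξ) dξ = 2^m m! δ_{m,n}, where ρ(ξ) = (4π)^{-1/2} exp(-ξ²/4). -/
open MeasureTheory

/-- Rescaled Hermite polynomial `h_m`. -/
noncomputable def hermiteH (m : ℕ) (ξ : ℝ) : ℝ :=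
  ∑ i ∈ Finset.range (m / 2 + 1),
    ((Nat.factorial m : ℝ) / ((Nat.factorial i : ℝ) * (Nat.factorial (m - 2 * i) : ℝ)))
      * (-1 : ℝ) ^ i * ξ ^ (m - 2 * i)

/-- Gaussian weight `ρ(ξ) = (4π)^{-1/2} e^{-ξ²/4}`. -/
noncomputable def weightRho (ξ : ℝ) : ℝ :=
  (4 * Real.pi) ^ (-(1 : ℝ) / 2) * Real.exp (-ξ ^ 2 / 4)

open Polynomial Finset

noncomputable def hermiteCoef (m i : ℕ) : ℝ :=
  if 2 * i ≤ m then
    (Nat.factorial m : ℝ) / ((Nat.factorial i : ℝ) * (Nat.factorial (m - 2 * i) : ℝ))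
  else 0

noncomputable def hermPoly (m : ℕ) : Polynomial ℝ :=
  ∑ i ∈ Finset.range (m + 1),
    Polynomial.C (hermiteCoef m i * (-1) ^ i) * Polynomial.X ^ (m - 2 * i)

lemma hermiteCoef_zero (m : ℕ) : hermiteCoef m 0 = 1 := by
  have h : (Nat.factorial m : ℝ) ≠ 0 := by positivity
  simp [hermiteCoef, h]

lemma hermiteCoef_eq_zero {m i : ℕ} (h : m < 2 * i) : hermiteCoef m i = 0 := by
  simp [hermiteCoef, Nat.not_le.mpr h, h]

lemma hermiteCoef_rec (m i : ℕ) :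
    hermiteCoef (m + 1) (i + 1)
      = hermiteCoef m (i + 1) + 2 * ((m - 2 * i : ℕ) : ℝ) * hermiteCoef m i := by
  by_cases h1 : 2 * (i + 1) ≤ m
  · obtain ⟨a, rfl⟩ : ∃ a, m = a + 2 * i + 2 := ⟨m - (2 * i + 2), by omega⟩
    rw [hermiteCoef, if_pos (by omega), hermiteCoef, if_pos (by omega),
      hermiteCoef, if_pos (by omega)]
    have e1 : a + 2 * i + 2 + 1 - 2 * (i + 1) = a + 1 := by omega
    have e2 : a + 2 * i + 2 - 2 * (i + 1) = a := by omega
    have e3 : a + 2 * i + 2 - 2 * i = a + 2 := by omega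
    rw [e1, e2, e3]
    have f1 : (Nat.factorial (a + 2 * i + 2 + 1) : ℝ)
        = (a + 2 * i + 3) * Nat.factorial (a + 2 * i + 2) := by
      rw [show a + 2 * i + 2 + 1 = (a + 2 * i + 2) + 1 from rfl, Nat.factorial_succ]
      push_cast; ring
    have f2 : (Nat.factorial (a + 1) : ℝ) = (a + 1) * Nat.factorial a := by
      rw [Nat.factorial_succ]; push_cast; ring
    have f3 : (Nat.factorial (a + 2) : ℝ) = (a + 2) * (a + 1) * Nat.factorial a := by
      rw [show a + 2 = (a + 1) + 1 from rfl, Nat.factorial_succ]; push_cast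
      rw [show ((a:ℝ) + 1 + 1) = (a:ℝ) + 2 by ring]
      nlinarith [f2]
    have f4 : (Nat.factorial (i + 1) : ℝ) = (i + 1) * Nat.factorial i := by
      rw [Nat.factorial_succ]; push_cast; ring
    have ha : (Nat.factorial a : ℝ) ≠ 0 := by positivity
    have hi : (Nat.factorial i : ℝ) ≠ 0 := by positivity
    rw [f1, f2, f3, f4]
    push_cast
    field_simp
    ring
  · by_cases h2 : 2 * (i + 1) = m + 1
    · obtain ⟨rfl⟩ : m = 2 * i + 1 := by omega
      rw [hermiteCoef, if_pos (by omega), hermiteCoef, if_neg (by omega),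
        hermiteCoef, if_pos (by omega)]
      have e1 : 2 * i + 1 + 1 - 2 * (i + 1) = 0 := by omega
      have e2 : 2 * i + 1 - 2 * i = 1 := by omega
      rw [e1, e2]
      have f1 : (Nat.factorial (2 * i + 1 + 1) : ℝ)
          = (2 * i + 2) * Nat.factorial (2 * i + 1) := by
        rw [Nat.factorial_succ]; push_cast; ring
      have f4 : (Nat.factorial (i + 1) : ℝ) = (i + 1) * Nat.factorial i := by
        rw [Nat.factorial_succ]; push_cast; ring
      have hi : (Nat.factorial i : ℝ) ≠ 0 := by positivity
      rw [f1, f4, Nat.factorial_zero, Nat.factorial_one]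
      push_cast
      field_simp
      ring
    · have e0 : (m - 2 * i : ℕ) = 0 := by omega
      rw [hermiteCoef, if_neg (by omega), hermiteCoef, if_neg (by omega), e0]
      push_cast
      ring

lemma hermPoly_succ (m : ℕ) :
    hermPoly (m + 1) = Polynomial.X * hermPoly m - 2 * Polynomial.derivative (hermPoly m) := by
  have hA : Polynomial.X * hermPoly m
      = ∑ j ∈ Finset.range (m + 2),
          Polynomial.C (hermiteCoef m j * (-1) ^ j) * Polynomial.X ^ (m + 1 - 2 * j) := by
    rw [Finset.sum_range_succ, hermiteCoef_eq_zero (by omega : m < 2 * (m + 1))]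
    simp only [zero_mul, Polynomial.C_0, zero_mul, add_zero]
    rw [hermPoly, Finset.mul_sum]
    refine Finset.sum_congr rfl fun i hi => ?_
    by_cases h : 2 * i ≤ m
    · rw [show m + 1 - 2 * i = (m - 2 * i) + 1 from by omega, pow_succ]
      ring
    · rw [hermiteCoef_eq_zero (by omega)]; simp
  have hB : (2 : Polynomial ℝ) * Polynomial.derivative (hermPoly m)
      = ∑ j ∈ Finset.range (m + 2),
          (if j = 0 then 0 else
            Polynomial.C (2 * (hermiteCoef m (j - 1) * (-1) ^ (j - 1))
              * ((m - 2 * (j - 1) : ℕ) : ℝ)) * Polynomial.X ^ (m - 2 * (j - 1) - 1)) := by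
    have shift := Finset.sum_range_succ' (fun j => if j = 0 then (0 : Polynomial ℝ) else
        Polynomial.C (2 * (hermiteCoef m (j - 1) * (-1) ^ (j - 1))
          * ((m - 2 * (j - 1) : ℕ) : ℝ)) * Polynomial.X ^ (m - 2 * (j - 1) - 1)) (m + 1)
    rw [shift]
    simp only [Nat.succ_ne_zero, if_false, Nat.add_sub_cancel, reduceIte, add_zero]
    rw [hermPoly, Polynomial.derivative_sum]
    simp only [Finset.mul_sum]
    refine Finset.sum_congr rfl fun i hi => ?_
    rw [Polynomial.derivative_C_mul_X_pow,
      show (2 : Polynomial ℝ) = Polynomial.C (2 : ℝ) from (map_ofNat Polynomial.C 2).symm,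
      ← mul_assoc, ← Polynomial.C_mul]
    congr 1
    ring_nf
  rw [hA, hB, ← Finset.sum_sub_distrib, hermPoly]
  refine Finset.sum_congr rfl fun j hj => ?_
  rcases Nat.eq_zero_or_eq_succ_pred j with h0 | hs
  · subst h0
    simp [hermiteCoef_zero]
  · obtain ⟨i, rfl⟩ : ∃ i, j = i + 1 := ⟨j - 1, hs⟩
    simp only [if_neg (Nat.succ_ne_zero i), Nat.add_sub_cancel]
    rw [hermiteCoef_rec]
    by_cases h : 2 * i ≤ m
    · have e1 : m - 2 * i - 1 = m + 1 - 2 * (i + 1) := by omega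
      have e2 : m + 1 - 2 * (i + 1) = m + 1 - 2 * (i + 1) := rfl
      rw [e1, ← sub_mul, ← Polynomial.C_sub]
      congr 2
      rw [pow_succ]
      ring
    · rw [hermiteCoef_eq_zero (by omega : m < 2 * i),
        show (m - 2 * i : ℕ) = 0 from by omega]
      push_cast
      ring_nf
      simp

lemma hermPoly_zero : hermPoly 0 = Polynomial.C 1 := by
  simp [hermPoly, hermiteCoef_zero]

lemma eval_hermPoly (m : ℕ) (ξ : ℝ) : (hermPoly m).eval ξ = hermiteH m ξ := by
  rw [hermPoly, Polynomial.eval_finset_sum, hermiteH]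
  rw [← Finset.sum_subset (Finset.range_subset_range.mpr (by omega : m / 2 + 1 ≤ m + 1))
    (fun i hi hni => ?_)]
  · refine Finset.sum_congr rfl fun i hi => ?_
    simp only [Finset.mem_range] at hi
    rw [Polynomial.eval_mul, Polynomial.eval_C, Polynomial.eval_pow, Polynomial.eval_X,
      hermiteCoef, if_pos (by omega)]
  · simp only [Finset.mem_range] at hi hni
    rw [hermiteCoef_eq_zero (by omega)]
    simp

lemma iterate_derivative_hermPoly_sum (k : ℕ) (s : Finset ℕ) (f : ℕ → Polynomial ℝ) :
    Polynomial.derivative^[k] (∑ i ∈ s, f i) = ∑ i ∈ s, Polynomial.derivative^[k] (f i) := by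
  induction k with
  | zero => simp
  | succ k ih => rw [Function.iterate_succ_apply', ih, Polynomial.derivative_sum]
                 simp [Function.iterate_succ_apply']

lemma iterate_derivative_hermPoly_self (m : ℕ) :
    Polynomial.derivative^[m] (hermPoly m) = Polynomial.C (Nat.factorial m : ℝ) := by
  rw [hermPoly, iterate_derivative_hermPoly_sum]
  have h0 : ∀ i ∈ Finset.range (m + 1), i ≠ 0 →
      Polynomial.derivative^[m] (Polynomial.C (hermiteCoef m i * (-1) ^ i)
        * Polynomial.X ^ (m - 2 * i)) = 0 := by
    intro i hi hne
    rw [Polynomial.iterate_derivative_C_mul, Polynomial.iterate_derivative_X_pow_eq_natCast_mul]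
    by_cases h : 2 * i ≤ m
    · rw [show Nat.descFactorial (m - 2 * i) m = 0 from
        Nat.descFactorial_eq_zero_iff_lt.mpr (by omega)]
      simp
    · rw [hermiteCoef_eq_zero (by omega)]
      simp
  rw [Finset.sum_eq_single 0 h0 (fun h => absurd h (by simp))]
  rw [hermiteCoef_zero, Polynomial.iterate_derivative_C_mul, Nat.mul_zero, Nat.sub_zero,
    Polynomial.iterate_derivative_X_pow_eq_natCast_mul, Nat.descFactorial_self, Nat.sub_self]
  simp

lemma iterate_derivative_hermPoly_lt {m k : ℕ} (h : m < k) :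
    Polynomial.derivative^[k] (hermPoly m) = 0 := by
  rw [hermPoly, iterate_derivative_hermPoly_sum]
  refine Finset.sum_eq_zero fun i hi => ?_
  rw [Polynomial.iterate_derivative_C_mul, Polynomial.iterate_derivative_X_pow_eq_natCast_mul,
    show Nat.descFactorial (m - 2 * i) k = 0 from
      Nat.descFactorial_eq_zero_iff_lt.mpr (by omega)]
  simp

lemma integrable_monomial_gauss (n : ℕ) :
    Integrable fun x : ℝ => x ^ n * Real.exp (-x ^ 2 / 4) := by
  have hint : Integrable fun x : ℝ => Real.exp (-(1/8) * x ^ 2) :=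
    integrable_exp_neg_mul_sq (by norm_num)
  refine (hint.const_mul ((Nat.factorial n : ℝ) * Real.exp 2)).mono'
    ((continuous_pow n).mul (Real.continuous_exp.comp (by continuity))).aestronglyMeasurable
    (Filter.Eventually.of_forall fun x => ?_)
  rw [norm_mul, norm_pow, Real.norm_eq_abs, Real.norm_eq_abs, Real.abs_exp]
  have h1 : |x| ^ n ≤ (Nat.factorial n : ℝ) * Real.exp |x| := by
    have := Real.pow_div_factorial_le_exp |x| (abs_nonneg x) n
    have hf : (0:ℝ) < (Nat.factorial n : ℝ) := by positivity
    calc |x| ^ n = (|x| ^ n / (Nat.factorial n : ℝ)) * (Nat.factorial n : ℝ) := by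
          field_simp
      _ ≤ Real.exp |x| * (Nat.factorial n : ℝ) := by
          exact mul_le_mul_of_nonneg_right this hf.le
      _ = (Nat.factorial n : ℝ) * Real.exp |x| := by ring
  have h2 : Real.exp |x| ≤ Real.exp (x ^ 2 / 8 + 2) := by
    apply Real.exp_le_exp.mpr
    nlinarith [sq_nonneg (|x| - 4), sq_abs x, abs_nonneg x]
  calc |x| ^ n * Real.exp (-x ^ 2 / 4)
      ≤ (Nat.factorial n : ℝ) * Real.exp (x ^ 2 / 8 + 2) * Real.exp (-x ^ 2 / 4) := by
        refine mul_le_mul_of_nonneg_right ?_ (Real.exp_pos _).le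
        refine h1.trans (mul_le_mul_of_nonneg_left h2 ?_)
        positivity
    _ = (Nat.factorial n : ℝ) * Real.exp 2 * Real.exp (-(1/8) * x ^ 2) := by
        rw [mul_assoc, ← Real.exp_add, mul_assoc, ← Real.exp_add]
        ring_nf

lemma integrable_poly_gauss (p : Polynomial ℝ) :
    Integrable fun x : ℝ => p.eval x * Real.exp (-x ^ 2 / 4) := by
  induction p using Polynomial.induction_on' with
  | add p q hp hq =>
    simpa [add_mul, Pi.add_def] using hp.add hq
  | monomial n a =>
    simp only [Polynomial.eval_monomial]
    simpa [mul_assoc] using (integrable_monomial_gauss n).const_mul a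

lemma hasDerivAt_poly_gauss (p : Polynomial ℝ) (x : ℝ) :
    HasDerivAt (fun y => p.eval y * Real.exp (-y ^ 2 / 4))
      ((Polynomial.derivative p - Polynomial.C (1/2) * Polynomial.X * p).eval x
        * Real.exp (-x ^ 2 / 4)) x := by
  have hinner : HasDerivAt (fun y : ℝ => -y ^ 2 / 4) (-x / 2) x := by
    have h := (hasDerivAt_pow 2 x).neg.div_const 4
    simpa using h.congr_deriv (by push_cast; ring)
  have hexp : HasDerivAt (fun y : ℝ => Real.exp (-y ^ 2 / 4))
      (Real.exp (-x ^ 2 / 4) * (-x / 2)) x := hinner.exp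
  have h := (p.hasDerivAt x).mul hexp
  refine h.congr_deriv ?_
  simp only [Polynomial.eval_sub, Polynomial.eval_mul, Polynomial.eval_C, Polynomial.eval_X]
  ring

lemma key_ibp (k : ℕ) (p : Polynomial ℝ) :
    ∫ x : ℝ, p.eval x * ((hermPoly k).eval x * Real.exp (-x ^ 2 / 4))
      = 2 ^ k * ∫ x : ℝ, (Polynomial.derivative^[k] p).eval x * Real.exp (-x ^ 2 / 4) := by
  induction k generalizing p with
  | zero => simp [hermPoly_zero]
  | succ k ih =>
    set q := hermPoly k with hq
    set r := Polynomial.derivative q - Polynomial.C (1/2) * Polynomial.X * q with hr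
    have hu : ∀ x : ℝ, HasDerivAt (fun y => p.eval y) ((Polynomial.derivative p).eval x) x :=
      fun x => p.hasDerivAt x
    have hv : ∀ x : ℝ, HasDerivAt (fun y => q.eval y * Real.exp (-y ^ 2 / 4))
        (r.eval x * Real.exp (-x ^ 2 / 4)) x := fun x => hasDerivAt_poly_gauss q x
    have huv' : Integrable ((fun y => p.eval y) * fun x => r.eval x * Real.exp (-x ^ 2 / 4)) := by
      have : ((fun y => p.eval y) * fun x => r.eval x * Real.exp (-x ^ 2 / 4))
          = fun x => (p * r).eval x * Real.exp (-x ^ 2 / 4) := by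
        funext x; simp [Polynomial.eval_mul]; ring
      rw [this]; exact integrable_poly_gauss _
    have hu'v : Integrable ((fun x => (Polynomial.derivative p).eval x)
        * fun x => q.eval x * Real.exp (-x ^ 2 / 4)) := by
      have : ((fun x => (Polynomial.derivative p).eval x)
          * fun x => q.eval x * Real.exp (-x ^ 2 / 4))
          = fun x => (Polynomial.derivative p * q).eval x * Real.exp (-x ^ 2 / 4) := by
        funext x; simp [Polynomial.eval_mul]; ring
      rw [this]; exact integrable_poly_gauss _
    have huv : Integrable ((fun y => p.eval y) * fun x => q.eval x * Real.exp (-x ^ 2 / 4)) := by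
      have : ((fun y => p.eval y) * fun x => q.eval x * Real.exp (-x ^ 2 / 4))
          = fun x => (p * q).eval x * Real.exp (-x ^ 2 / 4) := by
        funext x; simp [Polynomial.eval_mul]; ring
      rw [this]; exact integrable_poly_gauss _
    have ibp := MeasureTheory.integral_mul_deriv_eq_deriv_mul_of_integrable (fun x _ => hu x) (fun x _ => hv x) huv' hu'v huv
    have step : ∫ x : ℝ, p.eval x * ((hermPoly (k+1)).eval x * Real.exp (-x ^ 2 / 4))
        = 2 * ∫ x : ℝ, (Polynomial.derivative p).eval x
            * (q.eval x * Real.exp (-x ^ 2 / 4)) := by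
      have hpt : ∀ x : ℝ, p.eval x * ((hermPoly (k+1)).eval x * Real.exp (-x ^ 2 / 4))
          = (-2) * (p.eval x * (r.eval x * Real.exp (-x ^ 2 / 4))) := by
        intro x
        rw [hermPoly_succ, ← hq, hr]
        simp only [Polynomial.eval_sub, Polynomial.eval_mul, Polynomial.eval_C,
          Polynomial.eval_X, Polynomial.eval_ofNat]
        ring
      rw [integral_congr_ae (Filter.Eventually.of_forall hpt), MeasureTheory.integral_const_mul, ibp]
      ring
    rw [step, ih (Polynomial.derivative p), ← Function.iterate_succ_apply]
    ring

theorem hermite_orthogonality (m n : ℕ) :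
    ∫ ξ : ℝ, hermiteH m ξ * hermiteH n ξ * weightRho ξ
      = (2 : ℝ) ^ m * (Nat.factorial m : ℝ) * (if m = n then 1 else 0) := by
  have hrw : ∀ ξ : ℝ, hermiteH m ξ * hermiteH n ξ * weightRho ξ
      = (4 * Real.pi) ^ (-(1:ℝ)/2)
        * ((hermPoly m).eval ξ * ((hermPoly n).eval ξ * Real.exp (-ξ ^ 2 / 4))) := by
    intro ξ
    rw [← eval_hermPoly, ← eval_hermPoly, weightRho]
    ring
  rw [integral_congr_ae (Filter.Eventually.of_forall hrw), MeasureTheory.integral_const_mul]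
  by_cases h : m = n
  · subst h
    rw [if_pos rfl, key_ibp m (hermPoly m), iterate_derivative_hermPoly_self]
    simp only [Polynomial.eval_C]
    rw [MeasureTheory.integral_const_mul]
    have hg : ∫ x : ℝ, Real.exp (-x ^ 2 / 4) = Real.sqrt (4 * Real.pi) := by
      have hpt : ∀ x : ℝ, Real.exp (-x ^ 2 / 4) = Real.exp (-(1/4) * x ^ 2) := by
        intro x; ring_nf
      rw [integral_congr_ae (Filter.Eventually.of_forall hpt), integral_gaussian,
        show Real.pi / (1/4) = 4 * Real.pi by ring]
    rw [hg]
    have hpos : (0:ℝ) < 4 * Real.pi := by positivity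
    rw [Real.sqrt_eq_rpow]
    have hAB : (4 * Real.pi) ^ (-(1:ℝ)/2) * (4 * Real.pi) ^ ((1:ℝ)/2) = 1 := by
      rw [← Real.rpow_add hpos]; norm_num
    have h12 : ((1:ℝ)/2) = (2:ℝ)⁻¹ := by norm_num
    linear_combination (2 ^ m * (Nat.factorial m : ℝ)) * hAB
  · rw [if_neg h]
    rcases lt_or_gt_of_ne h with hlt | hgt
    · rw [key_ibp n (hermPoly m), iterate_derivative_hermPoly_lt hlt]
      simp
    · have hcomm : ∀ x : ℝ, (hermPoly m).eval x * ((hermPoly n).eval x * Real.exp (-x ^ 2 / 4))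
          = (hermPoly n).eval x * ((hermPoly m).eval x * Real.exp (-x ^ 2 / 4)) := by
        intro x; ring
      rw [integral_congr_ae (Filter.Eventually.of_forall hcomm), key_ibp m (hermPoly n),
        iterate_derivative_hermPoly_lt hgt]
      simp
end

section
/- Let γ : (-δ₁,δ₁)^{N-ℓ} → ℝ be a continuous function such that for every ξ̃ and every h̃ with |h̃| < h₀ and ξ̃, ξ̃+h̃ in the domain, γ is differentiable at ξ̃ and |γ(ξ̃+h̃) - γ(ξ̃) - h̃·∇γ(ξ̃)| ≤ C |h̃|^{3/2} |log|h̃||^{μ} for some constants C, μ > 0. Then γ is of class C^{1,β} for every β ∈ (0, 1/2); in particular ∇γ is Hölder continuous with exponent β: |∇γ(ξ̃₁) - ∇γ(ξ̃₂)| ≤ C_β |ξ̃₁ - ξ̃₂|^{β} on compact subsets. -/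
open Metric Real

set_option maxHeartbeats 1000000

theorem taylor_bound_implies_holder_gradient (n : ℕ) (δ₁ h₀ C μ : ℝ)
    (hδ : 0 < δ₁) (hh₀ : 0 < h₀) (hC : 0 < C) (hμ : 0 < μ)
    (γ : EuclideanSpace ℝ (Fin n) → ℝ)
    (D : Set (EuclideanSpace ℝ (Fin n)))
    (hD : D = {ξ | ∀ i, |ξ i| < δ₁})
    (hcont : ContinuousOn γ D)
    (hdiff : ∀ ξ ∈ D, DifferentiableAt ℝ γ ξ)
    (htaylor : ∀ ξ ∈ D, ∀ h : EuclideanSpace ℝ (Fin n), ξ + h ∈ D → ‖h‖ < h₀ →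
      |γ (ξ + h) - γ ξ - (inner ℝ (gradient γ ξ) h : ℝ)|
        ≤ C * ‖h‖ ^ ((3 : ℝ) / 2) * |Real.log ‖h‖| ^ μ) :
    ∀ β ∈ Set.Ioo (0 : ℝ) (1 / 2), ∀ K : Set (EuclideanSpace ℝ (Fin n)),
      IsCompact K → K ⊆ D →
      ∃ Cβ > 0, ∀ ξ₁ ∈ K, ∀ ξ₂ ∈ K,
        ‖gradient γ ξ₁ - gradient γ ξ₂‖ ≤ Cβ * ‖ξ₁ - ξ₂‖ ^ β := by
  intro β hβ K hK hKD
  obtain ⟨hβ0, hβh⟩ := hβ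
  -- D is open
  have hDopen : IsOpen D := by
    rw [hD]
    have heq : {ξ : EuclideanSpace ℝ (Fin n) | ∀ i, |ξ i| < δ₁}
        = ⋂ i, (fun ξ : EuclideanSpace ℝ (Fin n) => |ξ i|) ⁻¹' Set.Iio δ₁ := by
      ext ξ; simp [Set.mem_iInter]
    rw [heq]
    exact isOpen_iInter_of_finite fun i =>
      isOpen_Iio.preimage (continuous_abs.comp (EuclideanSpace.proj i).continuous)
  obtain ⟨ε, hε, hthick⟩ := hK.exists_cthickening_subset_open hDopen hKD
  have hK' : IsCompact (cthickening ε K) := hK.cthickening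
  obtain ⟨M₀, hM₀⟩ := hK'.exists_bound_of_continuousOn (hcont.mono hthick)
  set M := max M₀ 0 with hMdef
  have hMnn : 0 ≤ M := le_max_right _ _
  have hMb : ∀ x ∈ cthickening ε K, |γ x| ≤ M := by
    intro x hx
    have := hM₀ x hx
    rw [Real.norm_eq_abs] at this
    exact this.trans (le_max_left _ _)
  have hsub : ∀ x : EuclideanSpace ℝ (Fin n), ∀ ξ ∈ K, dist x ξ ≤ ε → x ∈ D :=
    fun x ξ hξ hd => hthick (mem_cthickening_of_dist_le x ξ ε K hξ hd)
  have hsub' : ∀ x : EuclideanSpace ℝ (Fin n), ∀ ξ ∈ K, dist x ξ ≤ ε →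
      x ∈ cthickening ε K :=
    fun x ξ hξ hd => mem_cthickening_of_dist_le x ξ ε K hξ hd
  -- constants
  set t₀ := min (ε/2) (min (h₀/3) (1/2)) with ht₀def
  have ht₀pos : 0 < t₀ := by
    apply lt_min (by linarith) (lt_min (by linarith) (by norm_num))
  have ht₀ε : t₀ ≤ ε/2 := min_le_left _ _
  have ht₀h : t₀ ≤ h₀/3 := (min_le_right _ _).trans (min_le_left _ _)
  have ht₀1 : t₀ ≤ 1/2 := (min_le_right _ _).trans (min_le_right _ _)
  set εμ := (1/2 - β)/μ with hεμdef
  have hεμ : 0 < εμ := by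
    apply div_pos (by linarith) hμ
  set C₁ := C * εμ ^ (-μ) with hC₁def
  have hC₁ : 0 < C₁ := by positivity
  have heexp : εμ * μ = 1/2 - β := div_mul_cancel₀ _ hμ.ne'
  -- key estimate: φ(s) ≤ C₁ s^{1+β} for 0 ≤ s ≤ 1
  have key : ∀ s : ℝ, 0 ≤ s → s ≤ 1 →
      C * s ^ ((3:ℝ)/2) * |Real.log s| ^ μ ≤ C₁ * s ^ (1+β) := by
    intro s hs0 hs1
    rcases eq_or_lt_of_le hs0 with h0 | h0
    · rw [← h0, Real.zero_rpow (by norm_num : ((3:ℝ)/2) ≠ 0), Real.log_zero, abs_zero,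
        Real.zero_rpow hμ.ne', Real.zero_rpow (by positivity : (1+β) ≠ 0)]
      simp
    · have hlog : |Real.log s| = Real.log s⁻¹ := by
        rw [Real.log_inv, abs_of_nonpos (Real.log_nonpos hs0 hs1)]
      have h1 : Real.log s⁻¹ ≤ s⁻¹ ^ εμ / εμ :=
        Real.log_le_rpow_div (by positivity) hεμ
      have h2 : |Real.log s| ^ μ ≤ (s⁻¹ ^ εμ / εμ) ^ μ :=
        Real.rpow_le_rpow (abs_nonneg _) (hlog ▸ h1) hμ.le
      have e1 : (s⁻¹ ^ εμ / εμ) ^ μ = s ^ (-(εμ * μ)) / εμ ^ μ := by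
        rw [Real.div_rpow (by positivity) hεμ.le, ← Real.rpow_mul (by positivity),
          Real.inv_rpow hs0, ← Real.rpow_neg hs0]
      calc C * s ^ ((3:ℝ)/2) * |Real.log s| ^ μ
          ≤ C * s ^ ((3:ℝ)/2) * ((s⁻¹ ^ εμ / εμ) ^ μ) := by
            apply mul_le_mul_of_nonneg_left h2 (by positivity)
        _ = C₁ * s ^ (1+β) := by
            rw [e1, hC₁def, Real.rpow_neg hεμ.le, heexp,
              show (1+β : ℝ) = 3/2 + -(1/2 - β) by ring, Real.rpow_add h0]
            ring
  -- bound on the gradient over K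
  set B := (2*M + C₁ * t₀ ^ (1+β)) / t₀ with hBdef
  have hBnn : 0 ≤ B := by positivity
  have hgradb : ∀ ξ ∈ K, ‖gradient γ ξ‖ ≤ B := by
    intro ξ hξ
    rcases eq_or_ne (gradient γ ξ) 0 with hg | hg
    · simpa [hg] using hBnn
    · set g := gradient γ ξ with hgdef
      have hgn : 0 < ‖g‖ := norm_pos_iff.mpr hg
      set h := (t₀ / ‖g‖) • g with hhdef
      have hhn : ‖h‖ = t₀ := by
        rw [hhdef, norm_smul, Real.norm_eq_abs, abs_of_pos (by positivity),
          div_mul_cancel₀ _ hgn.ne']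
      have hdist : dist (ξ + h) ξ ≤ ε := by
        rw [dist_eq_norm, add_sub_cancel_left, hhn]; linarith
      have hmem : ξ + h ∈ D := hsub _ ξ hξ hdist
      have htb := htaylor ξ (hKD hξ) h hmem (by rw [hhn]; linarith)
      rw [hhn] at htb
      have htb2 : |γ (ξ + h) - γ ξ - (inner ℝ g h : ℝ)| ≤ C₁ * t₀ ^ (1+β) :=
        htb.trans (key t₀ ht₀pos.le (by linarith))
      have hinner : (inner ℝ g h : ℝ) = t₀ * ‖g‖ := by
        rw [hhdef, real_inner_smul_right, real_inner_self_eq_norm_mul_norm]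
        field_simp
      rw [hinner] at htb2
      have h1 := (abs_le.mp htb2).1
      have ha : |γ (ξ + h)| ≤ M := hMb _ (hsub' _ ξ hξ hdist)
      have hb : |γ ξ| ≤ M := hMb _ (self_subset_cthickening K hξ)
      have ha' := (abs_le.mp ha).2
      have hb' := (abs_le.mp hb).1
      have : t₀ * ‖g‖ ≤ 2*M + C₁ * t₀ ^ (1+β) := by linarith
      rw [hBdef, le_div_iff₀ ht₀pos]
      linarith
  -- the Hölder constant
  refine ⟨C₁ * 6 + 2*B/(t₀ ^ β) + 1, by positivity, ?_⟩
  intro ξ₁ hξ₁ ξ₂ hξ₂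
  set Cβ := C₁ * 6 + 2*B/(t₀ ^ β) + 1 with hCβdef
  set r := ‖ξ₁ - ξ₂‖ with hrdef
  rcases eq_or_ne ξ₁ ξ₂ with heq | hne
  · have hz : ‖gradient γ ξ₁ - gradient γ ξ₂‖ = 0 := by rw [heq, sub_self, norm_zero]
    rw [hz]
    positivity
  have hr : 0 < r := by
    rw [hrdef, norm_pos_iff, sub_ne_zero]; exact hne
  have hrβ : 0 < r ^ β := Real.rpow_pos_of_pos hr β
  rcases le_or_gt r t₀ with hrt | hrt
  · -- small distance: the three-point Taylor argument
    rcases eq_or_ne (gradient γ ξ₁ - gradient γ ξ₂) 0 with hg | hg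
    · rw [hg, norm_zero]; positivity
    set g := gradient γ ξ₁ - gradient γ ξ₂ with hgdef
    have hgn : 0 < ‖g‖ := norm_pos_iff.mpr hg
    set d := ξ₂ - ξ₁ with hddef
    have hdn : ‖d‖ = r := by rw [hddef, hrdef, norm_sub_rev]
    set h := (r / ‖g‖) • g with hhdef
    have hhn : ‖h‖ = r := by
      rw [hhdef, norm_smul, Real.norm_eq_abs, abs_of_pos (by positivity),
        div_mul_cancel₀ _ hgn.ne']
    have hdhn : ‖d + h‖ ≤ 2*r := by
      calc ‖d + h‖ ≤ ‖d‖ + ‖h‖ := norm_add_le _ _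
        _ = 2*r := by rw [hdn, hhn]; ring
    have hpt1 : ξ₁ + (d + h) = ξ₂ + h := by rw [hddef]; abel
    have hpt2 : ξ₁ + d = ξ₂ := by rw [hddef]; abel
    -- membership and size conditions
    have hmem2 : ξ₂ + h ∈ D := hsub _ ξ₂ hξ₂ (by
      rw [dist_eq_norm, add_sub_cancel_left, hhn]; linarith)
    have hmem3 : ξ₁ + (d + h) ∈ D := by rw [hpt1]; exact hmem2
    have hmem4 : ξ₁ + d ∈ D := by rw [hpt2]; exact hKD hξ₂
    have hE2 := htaylor ξ₂ (hKD hξ₂) h hmem2 (by rw [hhn]; linarith)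
    have hE3 := htaylor ξ₁ (hKD hξ₁) (d + h) hmem3 (by
      have : 2*r < h₀ := by linarith
      linarith [hdhn])
    have hE4 := htaylor ξ₁ (hKD hξ₁) d hmem4 (by rw [hdn]; linarith)
    -- bound each error by C₁ * (size)^{1+β}
    have hb2 : |γ (ξ₂ + h) - γ ξ₂ - (inner ℝ (gradient γ ξ₂) h : ℝ)|
        ≤ C₁ * r ^ (1+β) := by
      refine hE2.trans ?_
      rw [hhn]; exact key r hr.le (by linarith)
    have hb4 : |γ (ξ₁ + d) - γ ξ₁ - (inner ℝ (gradient γ ξ₁) d : ℝ)|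
        ≤ C₁ * r ^ (1+β) := by
      refine hE4.trans ?_
      rw [hdn]; exact key r hr.le (by linarith)
    have hb3 : |γ (ξ₁ + (d + h)) - γ ξ₁ - (inner ℝ (gradient γ ξ₁) (d + h) : ℝ)|
        ≤ C₁ * 4 * r ^ (1+β) := by
      refine hE3.trans ?_
      have k1 : C * ‖d+h‖ ^ ((3:ℝ)/2) * |Real.log ‖d+h‖| ^ μ ≤ C₁ * ‖d+h‖ ^ (1+β) :=
        key _ (norm_nonneg _) (by linarith [hdhn])
      refine k1.trans ?_
      have k2 : ‖d+h‖ ^ (1+β) ≤ (2*r) ^ (1+β) :=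
        Real.rpow_le_rpow (norm_nonneg _) hdhn (by positivity)
      have k3 : (2*r) ^ (1+β) = 2 ^ (1+β) * r ^ (1+β) :=
        Real.mul_rpow (by norm_num) hr.le
      have k4 : (2:ℝ) ^ (1+β) ≤ 4 := by
        calc (2:ℝ) ^ (1+β) ≤ 2 ^ (2:ℝ) :=
              Real.rpow_le_rpow_of_exponent_le one_le_two (by linarith)
          _ = 4 := by
              rw [show (2:ℝ) = ((2:ℕ):ℝ) by norm_num, Real.rpow_natCast]; norm_num
      have : (2*r) ^ (1+β) ≤ 4 * r ^ (1+β) := by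
        rw [k3]
        exact mul_le_mul_of_nonneg_right k4 (by positivity)
      nlinarith [Real.rpow_nonneg hr.le (1+β), hC₁]
    -- the algebraic identity
    have hinner : (inner ℝ g h : ℝ) = r * ‖g‖ := by
      rw [hhdef, real_inner_smul_right, real_inner_self_eq_norm_mul_norm]
      field_simp
    have hid : (inner ℝ g h : ℝ)
        = (γ (ξ₂ + h) - γ ξ₂ - (inner ℝ (gradient γ ξ₂) h : ℝ))
          - (γ (ξ₁ + (d + h)) - γ ξ₁ - (inner ℝ (gradient γ ξ₁) (d + h) : ℝ))
          + (γ (ξ₁ + d) - γ ξ₁ - (inner ℝ (gradient γ ξ₁) d : ℝ)) := by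
      rw [hpt1, hpt2, inner_add_right, hgdef, inner_sub_left]
      ring
    have habs : r * ‖g‖ ≤ C₁ * 6 * r ^ (1+β) := by
      rw [← hinner, hid]
      calc (γ (ξ₂ + h) - γ ξ₂ - (inner ℝ (gradient γ ξ₂) h : ℝ))
          - (γ (ξ₁ + (d + h)) - γ ξ₁ - (inner ℝ (gradient γ ξ₁) (d + h) : ℝ))
          + (γ (ξ₁ + d) - γ ξ₁ - (inner ℝ (gradient γ ξ₁) d : ℝ))
          ≤ |γ (ξ₂ + h) - γ ξ₂ - (inner ℝ (gradient γ ξ₂) h : ℝ)|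
            + |γ (ξ₁ + (d + h)) - γ ξ₁ - (inner ℝ (gradient γ ξ₁) (d + h) : ℝ)|
            + |γ (ξ₁ + d) - γ ξ₁ - (inner ℝ (gradient γ ξ₁) d : ℝ)| := by
            have u1 := le_abs_self (γ (ξ₂ + h) - γ ξ₂ - (inner ℝ (gradient γ ξ₂) h : ℝ))
            have u2 := neg_abs_le (γ (ξ₁ + (d + h)) - γ ξ₁ - (inner ℝ (gradient γ ξ₁) (d + h) : ℝ))
            have u3 := le_abs_self (γ (ξ₁ + d) - γ ξ₁ - (inner ℝ (gradient γ ξ₁) d : ℝ))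
            linarith
        _ ≤ C₁ * r ^ (1+β) + C₁ * 4 * r ^ (1+β) + C₁ * r ^ (1+β) := by
            linarith [hb2, hb3, hb4]
        _ = C₁ * 6 * r ^ (1+β) := by ring
    have hsplit : r ^ (1+β) = r * r ^ β := by
      rw [Real.rpow_add hr, Real.rpow_one]
    rw [hsplit] at habs
    have hfin : ‖g‖ ≤ C₁ * 6 * r ^ β := by
      have := le_of_mul_le_mul_left (by linarith : r * ‖g‖ ≤ r * (C₁ * 6 * r ^ β)) hr
      exact this
    refine hfin.trans ?_
    have : 0 ≤ (2*B/(t₀ ^ β) + 1) * r ^ β := by positivity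
    rw [hCβdef]; nlinarith
  · -- large distance: use the uniform gradient bound
    have h2B : ‖gradient γ ξ₁ - gradient γ ξ₂‖ ≤ 2*B := by
      calc ‖gradient γ ξ₁ - gradient γ ξ₂‖
          ≤ ‖gradient γ ξ₁‖ + ‖gradient γ ξ₂‖ := norm_sub_le _ _
        _ ≤ 2*B := by linarith [hgradb ξ₁ hξ₁, hgradb ξ₂ hξ₂]
    have htβ : 0 < t₀ ^ β := Real.rpow_pos_of_pos ht₀pos β
    have hmono : t₀ ^ β ≤ r ^ β :=
      Real.rpow_le_rpow ht₀pos.le hrt.le hβ0.le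
    have : 2*B ≤ 2*B/(t₀ ^ β) * r ^ β := by
      rw [div_mul_eq_mul_div, le_div_iff₀ htβ]
      nlinarith
    refine h2B.trans (this.trans ?_)
    rw [hCβdef]
    nlinarith [hrβ, hC₁]
end
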